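/- Let N ≥ 3 be an integer and let 0 < δ < N−2. Then there exists a constant C > 0 such that for every y ∈ ℝ^N, ∫_{ℝ^N} |y−z|^{−(N−2)} (1+|z|)^{−(2+δ)} dz ≤ C (1+|y|)^{−δ}. -/

import Mathlib

open Real MeasureTheory Finset

noncomputable section

abbrev E (N : ℕ) := EuclideanSpace ℝ (Fin N)

namespace RieszAux

open Set Metric ENNReal Filter

variable {N : ℕ}

lemma finrankEN : Module.finrank ℝ (E N) = N := finrank_euclideanSpace_fin

lemma meas_g (p : ℝ) : Measurable fun x : E N => ENNReal.ofReal (‖x‖ ^ (-p)) := by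
  fun_prop

lemma lintegral_scale (F : E N → ℝ≥0∞) (hF : Measurable F) {r : ℝ} (hr : 0 < r) :
    ∫⁻ x : E N, F x = ENNReal.ofReal (r ^ (N : ℕ)) * ∫⁻ x : E N, F (r • x) := by
  have hmap := MeasureTheory.Measure.map_addHaar_smul (volume : Measure (E N)) hr.ne'
  have h1 : ∫⁻ x : E N, F (r • x) = ∫⁻ x, F x ∂(Measure.map (r • ·) (volume : Measure (E N))) := by
    rw [lintegral_map hF (measurable_const_smul r)]
  rw [h1, hmap, lintegral_smul_measure, smul_eq_mul, finrankEN, ← mul_assoc, ← ENNReal.ofReal_mul (by positivity),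
    abs_of_nonneg (by positivity), mul_inv_cancel₀ (by positivity), ENNReal.ofReal_one, one_mul]

lemma set_scale (p : ℝ) {r : ℝ} (hr : 0 < r) (s : Set (E N)) (hs : MeasurableSet s) :
    ∫⁻ x : E N in s, ENNReal.ofReal (‖x‖ ^ (-p))
      = ENNReal.ofReal (r ^ ((N : ℝ) - p)) *
        ∫⁻ x : E N in (fun x : E N => r • x) ⁻¹' s, ENNReal.ofReal (‖x‖ ^ (-p)) := by
  have hmeas : Measurable fun x : E N => s.indicator (fun x => ENNReal.ofReal (‖x‖ ^ (-p))) x :=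
    (meas_g p).indicator hs
  have key := lintegral_scale (s.indicator fun x : E N => ENNReal.ofReal (‖x‖ ^ (-p))) hmeas hr
  rw [lintegral_indicator hs] at key
  have hcomp : ∀ x : E N, s.indicator (fun x => ENNReal.ofReal (‖x‖ ^ (-p))) (r • x)
      = ENNReal.ofReal (r ^ (-p)) *
        ((fun x : E N => r • x) ⁻¹' s).indicator (fun x => ENNReal.ofReal (‖x‖ ^ (-p))) x := by
    intro x
    by_cases hx : r • x ∈ s
    · rw [Set.indicator_of_mem hx, Set.indicator_of_mem (by exact hx),
        ← ENNReal.ofReal_mul (by positivity)]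
      congr 1
      rw [norm_smul, Real.norm_eq_abs, abs_of_nonneg hr.le,
        Real.mul_rpow hr.le (norm_nonneg _)]
    · rw [Set.indicator_of_notMem hx, Set.indicator_of_notMem (by exact hx), mul_zero]
  simp_rw [hcomp] at key
  rw [lintegral_const_mul' _ _ ENNReal.ofReal_ne_top, lintegral_indicator
    (hs.preimage (measurable_const_smul r)) _, ← mul_assoc, ← ENNReal.ofReal_mul (by positivity)] at key
  rw [key, ← Real.rpow_natCast r N, ← Real.rpow_add hr, ← sub_eq_add_neg]

lemma preimage_ball {r : ℝ} (hr : 0 < r) :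
    (fun x : E N => r • x) ⁻¹' (ball (0 : E N) r) = ball (0 : E N) 1 := by
  ext x
  simp only [Set.mem_preimage, mem_ball_zero_iff, norm_smul, Real.norm_eq_abs,
    abs_of_nonneg hr.le]
  constructor
  · intro h; nlinarith [norm_nonneg x]
  · intro h; nlinarith [norm_nonneg x]

lemma ball_scale (p : ℝ) {r : ℝ} (hr : 0 < r) :
    ∫⁻ x : E N in ball (0 : E N) r, ENNReal.ofReal (‖x‖ ^ (-p))
      = ENNReal.ofReal (r ^ ((N : ℝ) - p)) *
        ∫⁻ x : E N in ball (0 : E N) 1, ENNReal.ofReal (‖x‖ ^ (-p)) := by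
  rw [set_scale p hr _ measurableSet_ball, preimage_ball hr]

lemma compl_scale (p : ℝ) {r : ℝ} (hr : 0 < r) :
    ∫⁻ x : E N in (ball (0 : E N) r)ᶜ, ENNReal.ofReal (‖x‖ ^ (-p))
      = ENNReal.ofReal (r ^ ((N : ℝ) - p)) *
        ∫⁻ x : E N in (ball (0 : E N) 1)ᶜ, ENNReal.ofReal (‖x‖ ^ (-p)) := by
  rw [set_scale p hr _ measurableSet_ball.compl, Set.preimage_compl, preimage_ball hr]

lemma translate (y : E N) (p r : ℝ) :
    ∫⁻ z : E N in ball y r, ENNReal.ofReal (‖y - z‖ ^ (-p))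
      = ∫⁻ w : E N in ball (0 : E N) r, ENNReal.ofReal (‖w‖ ^ (-p)) := by
  have hmp : MeasurePreserving (fun z : E N => y - z) volume volume := by
    simp only [sub_eq_add_neg]
    exact (measurePreserving_add_left volume y).comp (Measure.measurePreserving_neg volume)
  have hemb : MeasurableEmbedding (fun z : E N => y - z) :=
    (MeasurableEquiv.subLeft y).measurableEmbedding
  have h := hmp.setLIntegral_comp_preimage_emb hemb
    (fun w : E N => ENNReal.ofReal (‖w‖ ^ (-p))) (ball (0 : E N) r)
  have hpre : (fun z : E N => y - z) ⁻¹' ball (0 : E N) r = ball y r := by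
    ext z
    simp [mem_ball, dist_eq_norm, norm_sub_rev]
  rw [← h, hpre]

lemma meas_le (hN : 0 < N) {p t : ℝ} (hp : 0 < p) (ht : 0 < t) (S : Set (E N)) :
    (volume.restrict S) {a : E N | t ≤ ‖a‖ ^ (-p)}
      ≤ ENNReal.ofReal (t ^ (-((N : ℝ) / p))) * volume (ball (0 : E N) 1) := by
  have hsub : {a : E N | t ≤ ‖a‖ ^ (-p)} ⊆ closedBall (0 : E N) (t ^ (-p⁻¹)) := by
    intro a ha
    simp only [Set.mem_setOf_eq] at ha
    have hna : 0 < ‖a‖ := by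
      rcases lt_or_eq_of_le (norm_nonneg a) with h | h
      · exact h
      · exfalso
        rw [← h, Real.zero_rpow (neg_ne_zero.2 hp.ne')] at ha
        linarith
    have h2 : (‖a‖ ^ (-p)) ^ (-p⁻¹) ≤ t ^ (-p⁻¹) :=
      Real.rpow_le_rpow_of_nonpos ht ha (by simp [le_of_lt, inv_pos.2 hp])
    rw [← Real.rpow_mul hna.le, neg_mul_neg, mul_inv_cancel₀ hp.ne', Real.rpow_one] at h2
    simpa [mem_closedBall, dist_eq_norm] using h2
  calc (volume.restrict S) {a : E N | t ≤ ‖a‖ ^ (-p)}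
      ≤ volume {a : E N | t ≤ ‖a‖ ^ (-p)} := Measure.restrict_le_self _
    _ ≤ volume (closedBall (0 : E N) (t ^ (-p⁻¹))) := measure_mono hsub
    _ = ENNReal.ofReal ((t ^ (-p⁻¹)) ^ Module.finrank ℝ (E N)) * volume (ball (0 : E N) 1) :=
        Measure.addHaar_closedBall _ _ (by positivity)
    _ = ENNReal.ofReal (t ^ (-((N : ℝ) / p))) * volume (ball (0 : E N) 1) := by
        congr 1
        rw [finrankEN, ← Real.rpow_natCast (t ^ (-p⁻¹)) N, ← Real.rpow_mul ht.le]
        congr 1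
        field_simp

lemma finite_small (hN : 0 < N) {p : ℝ} (hp : 0 < p) (hpN : p < N) :
    (∫⁻ x : E N in ball (0 : E N) 1, ENNReal.ofReal (‖x‖ ^ (-p))) < ∞ := by
  have hmeas : AEMeasurable (fun a : E N => ‖a‖ ^ (-p))
      (volume.restrict (ball (0 : E N) 1)) := by fun_prop
  rw [show (∫⁻ x : E N in ball (0 : E N) 1, ENNReal.ofReal (‖x‖ ^ (-p)))
      = ∫⁻ x, ENNReal.ofReal (‖x‖ ^ (-p)) ∂(volume.restrict (ball (0 : E N) 1)) from rfl,
    lintegral_eq_lintegral_meas_le _ (Eventually.of_forall fun x => by positivity) hmeas]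
  set f := fun t : ℝ => (volume.restrict (ball (0 : E N) 1)) {a : E N | t ≤ ‖a‖ ^ (-p)} with hf
  calc ∫⁻ t in Ioi 0, f t ≤ ∫⁻ t in Ioc 0 1 ∪ Ioi 1, f t :=
        lintegral_mono_set Ioi_subset_Ioc_union_Ioi
    _ ≤ (∫⁻ t in Ioc 0 1, f t) + ∫⁻ t in Ioi 1, f t := lintegral_union_le _ _ _
    _ < ∞ := ENNReal.add_lt_top.2 ⟨?_, ?_⟩
  · have hb : ∀ t ∈ Ioc (0:ℝ) 1, f t ≤ volume (ball (0 : E N) 1) := fun t _ => by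
      calc f t ≤ (volume.restrict (ball (0 : E N) 1)) Set.univ := measure_mono (Set.subset_univ _)
        _ = volume (ball (0 : E N) 1) := by simp
    calc (∫⁻ t in Ioc 0 1, f t) ≤ ∫⁻ _ in Ioc (0:ℝ) 1, volume (ball (0 : E N) 1) :=
          setLIntegral_mono' measurableSet_Ioc hb
      _ = volume (ball (0 : E N) 1) * volume (Ioc (0:ℝ) 1) := by rw [setLIntegral_const]
      _ < ∞ := ENNReal.mul_lt_top measure_ball_lt_top (by simp)
  · have hb : ∀ t ∈ Ioi (1:ℝ), f t ≤
        ENNReal.ofReal (t ^ (-((N : ℝ) / p))) * volume (ball (0 : E N) 1) := fun t ht =>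
      meas_le hN hp (lt_trans one_pos ht) _
    calc (∫⁻ t in Ioi 1, f t)
        ≤ ∫⁻ t in Ioi (1:ℝ), ENNReal.ofReal (t ^ (-((N : ℝ) / p))) * volume (ball (0 : E N) 1) :=
          setLIntegral_mono' measurableSet_Ioi hb
      _ = (∫⁻ t in Ioi (1:ℝ), ENNReal.ofReal (t ^ (-((N : ℝ) / p)))) * volume (ball (0 : E N) 1) := by
          rw [lintegral_mul_const' _ _ measure_ball_lt_top.ne]
      _ < ∞ := by
          refine ENNReal.mul_lt_top ?_ measure_ball_lt_top
          refine IntegrableOn.setLIntegral_lt_top ?_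
          refine integrableOn_Ioi_rpow_of_lt ?_ one_pos
          rw [neg_lt_neg_iff, lt_div_iff₀ hp, one_mul]
          exact hpN

lemma finite_large (hN : 0 < N) {q : ℝ} (hq : (N : ℝ) < q) :
    (∫⁻ x : E N in (ball (0 : E N) 1)ᶜ, ENNReal.ofReal (‖x‖ ^ (-q))) < ∞ := by
  have hq0 : 0 < q := lt_of_le_of_lt (by positivity) hq
  have hmeas : AEMeasurable (fun a : E N => ‖a‖ ^ (-q))
      (volume.restrict (ball (0 : E N) 1)ᶜ) := by fun_prop
  rw [show (∫⁻ x : E N in (ball (0 : E N) 1)ᶜ, ENNReal.ofReal (‖x‖ ^ (-q)))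
      = ∫⁻ x, ENNReal.ofReal (‖x‖ ^ (-q)) ∂(volume.restrict (ball (0 : E N) 1)ᶜ) from rfl,
    lintegral_eq_lintegral_meas_le _ (Eventually.of_forall fun x => by positivity) hmeas]
  set f := fun t : ℝ => (volume.restrict (ball (0 : E N) 1)ᶜ) {a : E N | t ≤ ‖a‖ ^ (-q)} with hf
  calc ∫⁻ t in Ioi 0, f t ≤ ∫⁻ t in Ioc 0 1 ∪ Ioi 1, f t :=
        lintegral_mono_set Ioi_subset_Ioc_union_Ioi
    _ ≤ (∫⁻ t in Ioc 0 1, f t) + ∫⁻ t in Ioi 1, f t := lintegral_union_le _ _ _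
    _ < ∞ := ENNReal.add_lt_top.2 ⟨?_, ?_⟩
  · have hb : ∀ t ∈ Ioc (0:ℝ) 1, f t ≤
        ENNReal.ofReal (t ^ (-((N : ℝ) / q))) * volume (ball (0 : E N) 1) := fun t ht =>
      meas_le hN hq0 ht.1 _
    calc (∫⁻ t in Ioc 0 1, f t)
        ≤ ∫⁻ t in Ioc (0:ℝ) 1, ENNReal.ofReal (t ^ (-((N : ℝ) / q))) * volume (ball (0 : E N) 1) :=
          setLIntegral_mono' measurableSet_Ioc hb
      _ = (∫⁻ t in Ioc (0:ℝ) 1, ENNReal.ofReal (t ^ (-((N : ℝ) / q)))) * volume (ball (0 : E N) 1) := by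
          rw [lintegral_mul_const' _ _ measure_ball_lt_top.ne]
      _ < ∞ := by
          refine ENNReal.mul_lt_top ?_ measure_ball_lt_top
          refine IntegrableOn.setLIntegral_lt_top ?_
          rw [← intervalIntegrable_iff_integrableOn_Ioc_of_le zero_le_one]
          apply intervalIntegral.intervalIntegrable_rpow'
          rw [neg_lt_neg_iff, div_lt_one hq0]
          exact hq
  · have hempty : ∀ t ∈ Ioi (1:ℝ), f t = 0 := by
      intro t ht
      rw [hf]
      simp only
      rw [Measure.restrict_apply' measurableSet_ball.compl]
      refine measure_mono_null ?_ (measure_empty (μ := (volume : Measure (E N))))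
      rintro a ⟨ha1, ha2⟩
      simp only [Set.mem_setOf_eq] at ha1
      simp only [Set.mem_compl_iff, mem_ball, dist_zero_right, not_lt] at ha2
      have : ‖a‖ ^ (-q) ≤ 1 :=
        Real.rpow_le_one_of_one_le_of_nonpos ha2 (by linarith)
      exact absurd (lt_of_lt_of_le ht (le_trans ha1 this)) (lt_irrefl _)
    rw [setLIntegral_congr_fun measurableSet_Ioi hempty]
    simp

end RieszAux

open Set Metric ENNReal Filter

/-- Convolution-type decay estimate: `∫ |y-z|^{-(N-2)} (1+|z|)^{-(2+δ)} dz ≤ C(1+|y|)^{-δ}`. -/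
theorem riesz_potential_decay (N : ℕ) (hN : 3 ≤ N) (δ : ℝ) (hδ : 0 < δ) (hδ' : δ < (N : ℝ) - 2) :
    ∃ C : ℝ, 0 < C ∧ ∀ y : E N,
      (∫ z : E N, ‖y - z‖ ^ (-((N : ℝ) - 2)) * (1 + ‖z‖) ^ (-(2 + δ)))
        ≤ C * (1 + ‖y‖) ^ (-δ) := by
  have hN0 : 0 < N := by omega
  have hN2 : (2:ℝ) < (N:ℝ) := by
    have h3 : (3:ℝ) ≤ (N:ℝ) := by exact_mod_cast hN
    linarith
  set p : ℝ := (N:ℝ) - 2 with hp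
  have hp0 : 0 < p := by rw [hp]; linarith
  set K1 : ℝ≥0∞ := ∫⁻ x : E N in ball (0:E N) 1, ENNReal.ofReal (‖x‖ ^ (-p)) with hK1
  set K2 : ℝ≥0∞ := ∫⁻ x : E N in ball (0:E N) 1, ENNReal.ofReal (‖x‖ ^ (-(2+δ))) with hK2
  set K3 : ℝ≥0∞ := ∫⁻ x : E N in (ball (0:E N) 1)ᶜ, ENNReal.ofReal (‖x‖ ^ (-((N:ℝ)+δ))) with hK3
  have hK1f : K1 ≠ ∞ := (RieszAux.finite_small hN0 hp0 (by rw [hp]; linarith)).ne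
  have hK2f : K2 ≠ ∞ := (RieszAux.finite_small hN0 (by linarith) (by linarith)).ne
  have hK3f : K3 ≠ ∞ := (RieszAux.finite_large hN0 (by linarith)).ne
  set M : ℝ≥0∞ := ENNReal.ofReal (2 ^ δ) * K1 + ENNReal.ofReal (2 ^ p) * K2
      + ENNReal.ofReal (4 ^ p) * K3 with hM
  have hMf : M ≠ ∞ := by
    rw [hM]
    exact ENNReal.add_ne_top.2 ⟨ENNReal.add_ne_top.2
      ⟨ENNReal.mul_ne_top ENNReal.ofReal_ne_top hK1f, ENNReal.mul_ne_top ENNReal.ofReal_ne_top hK2f⟩,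
      ENNReal.mul_ne_top ENNReal.ofReal_ne_top hK3f⟩
  refine ⟨M.toReal + 1, by positivity, fun y => ?_⟩
  set R : ℝ := 1 + ‖y‖ with hR
  have hR1 : 1 ≤ R := by rw [hR]; linarith [norm_nonneg y]
  have hR0 : 0 < R := lt_of_lt_of_le one_pos hR1
  have hR2 : 0 < R / 2 := by linarith
  have hfm : Measurable fun z : E N => ‖y - z‖ ^ (-p) * (1 + ‖z‖) ^ (-(2+δ)) := by fun_prop
  have hnonneg : ∀ z : E N, 0 ≤ ‖y - z‖ ^ (-p) * (1 + ‖z‖) ^ (-(2+δ)) := fun z => by positivity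
  rw [MeasureTheory.integral_eq_lintegral_of_nonneg_ae (Eventually.of_forall hnonneg)
    hfm.aestronglyMeasurable]
  set F : E N → ℝ≥0∞ := fun z => ENNReal.ofReal (‖y - z‖ ^ (-p) * (1 + ‖z‖) ^ (-(2+δ))) with hF
  have hA : MeasurableSet (ball y (R/2)) := measurableSet_ball
  have hB0 : MeasurableSet (ball (0:E N) R) := measurableSet_ball
  -- a.e. nonzero
  have h0ae : ∀ᵐ z : E N ∂volume, z ≠ 0 := by
    haveI : Nonempty (Fin N) := ⟨⟨0, hN0⟩⟩
    rw [ae_iff]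
    have h00 : {z : E N | ¬z ≠ 0} = {(0 : E N)} := by ext z; simp
    rw [h00]
    exact measure_singleton _
  -- region A bound
  have boundA : (∫⁻ z in ball y (R/2), F z)
      ≤ ENNReal.ofReal (R ^ (-δ)) * (ENNReal.ofReal (2 ^ δ) * K1) := by
    have hpt : ∀ z ∈ ball y (R/2),
        F z ≤ ENNReal.ofReal ((R/2) ^ (-(2+δ))) * ENNReal.ofReal (‖y - z‖ ^ (-p)) := by
      intro z hz
      rw [hF, ← ENNReal.ofReal_mul (by positivity)]
      apply ENNReal.ofReal_le_ofReal
      rw [mul_comm ((R/2) ^ (-(2+δ)))]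
      apply mul_le_mul_of_nonneg_left ?_ (by positivity)
      have hz' : ‖y - z‖ < R/2 := by
        rw [mem_ball, dist_eq_norm] at hz
        rwa [norm_sub_rev]
      have hyn : ‖y‖ - ‖z‖ ≤ ‖y - z‖ := norm_sub_norm_le y z
      apply Real.rpow_le_rpow_of_nonpos (by positivity) ?_ (by linarith)
      rw [hR] at hz' ⊢
      linarith
    calc (∫⁻ z in ball y (R/2), F z)
        ≤ ∫⁻ z in ball y (R/2),
            ENNReal.ofReal ((R/2) ^ (-(2+δ))) * ENNReal.ofReal (‖y - z‖ ^ (-p)) :=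
          setLIntegral_mono' hA hpt
      _ = ENNReal.ofReal ((R/2) ^ (-(2+δ))) * ∫⁻ z in ball y (R/2), ENNReal.ofReal (‖y - z‖ ^ (-p)) :=
          lintegral_const_mul' _ _ ENNReal.ofReal_ne_top
      _ = ENNReal.ofReal ((R/2) ^ (-(2+δ))) * (ENNReal.ofReal ((R/2) ^ ((N:ℝ) - p)) * K1) := by
          rw [RieszAux.translate, RieszAux.ball_scale p hR2]
      _ = ENNReal.ofReal ((R/2) ^ (-(2+δ)) * (R/2) ^ ((N:ℝ) - p)) * K1 := by
          rw [← mul_assoc, ← ENNReal.ofReal_mul (by positivity)]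
      _ = ENNReal.ofReal (R ^ (-δ)) * (ENNReal.ofReal (2 ^ δ) * K1) := by
          rw [← mul_assoc, ← ENNReal.ofReal_mul (by positivity)]
          congr 2
          have h2 : (N:ℝ) - p = 2 := by rw [hp]; ring
          rw [h2, ← Real.rpow_add hR2, show -(2+δ) + 2 = -δ by ring,
            Real.div_rpow hR0.le (by norm_num : (0:ℝ) ≤ 2), Real.rpow_neg (by norm_num : (0:ℝ) ≤ 2),
            div_eq_mul_inv, inv_inv]
  -- region B bound
  have boundB : (∫⁻ z in ball (0:E N) R ∩ (ball y (R/2))ᶜ, F z)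
      ≤ ENNReal.ofReal (R ^ (-δ)) * (ENNReal.ofReal (2 ^ p) * K2) := by
    have hpt : ∀ᵐ z : E N ∂volume, z ∈ ball (0:E N) R ∩ (ball y (R/2))ᶜ →
        F z ≤ ENNReal.ofReal ((R/2) ^ (-p)) * ENNReal.ofReal (‖z‖ ^ (-(2+δ))) := by
      filter_upwards [h0ae] with z hz0
      rintro ⟨-, hz2⟩
      have hzn : 0 < ‖z‖ := norm_pos_iff.2 hz0
      have hz' : R/2 ≤ ‖y - z‖ := by
        simp only [Set.mem_compl_iff, mem_ball, not_lt, dist_eq_norm] at hz2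
        rwa [norm_sub_rev] at hz2
      rw [hF, ← ENNReal.ofReal_mul (by positivity)]
      apply ENNReal.ofReal_le_ofReal
      apply mul_le_mul ?_ ?_ (by positivity) (by positivity)
      · exact Real.rpow_le_rpow_of_nonpos hR2 hz' (by linarith)
      · exact Real.rpow_le_rpow_of_nonpos hzn (by linarith) (by linarith)
    calc (∫⁻ z in ball (0:E N) R ∩ (ball y (R/2))ᶜ, F z)
        ≤ ∫⁻ z in ball (0:E N) R ∩ (ball y (R/2))ᶜ,
            ENNReal.ofReal ((R/2) ^ (-p)) * ENNReal.ofReal (‖z‖ ^ (-(2+δ))) :=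
          setLIntegral_mono_ae' (hB0.inter hA.compl) hpt
      _ ≤ ∫⁻ z in ball (0:E N) R,
            ENNReal.ofReal ((R/2) ^ (-p)) * ENNReal.ofReal (‖z‖ ^ (-(2+δ))) :=
          lintegral_mono_set Set.inter_subset_left
      _ = ENNReal.ofReal ((R/2) ^ (-p)) * ∫⁻ z in ball (0:E N) R, ENNReal.ofReal (‖z‖ ^ (-(2+δ))) :=
          lintegral_const_mul' _ _ ENNReal.ofReal_ne_top
      _ = ENNReal.ofReal ((R/2) ^ (-p)) * (ENNReal.ofReal (R ^ ((N:ℝ) - (2+δ))) * K2) := by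
          rw [RieszAux.ball_scale (2+δ) hR0]
      _ = ENNReal.ofReal ((R/2) ^ (-p) * R ^ ((N:ℝ) - (2+δ))) * K2 := by
          rw [← mul_assoc, ← ENNReal.ofReal_mul (by positivity)]
      _ = ENNReal.ofReal (R ^ (-δ)) * (ENNReal.ofReal (2 ^ p) * K2) := by
          rw [← mul_assoc, ← ENNReal.ofReal_mul (by positivity)]
          congr 2
          rw [Real.div_rpow hR0.le (by norm_num : (0:ℝ) ≤ 2), Real.rpow_neg (by norm_num : (0:ℝ) ≤ 2),
            div_eq_mul_inv, inv_inv, mul_comm (R ^ (-p)), mul_assoc, ← Real.rpow_add hR0]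
          rw [show -p + ((N:ℝ) - (2+δ)) = -δ by rw [hp]; ring]
          ring
  -- region C bound
  have boundC : (∫⁻ z in (ball (0:E N) R)ᶜ ∩ (ball y (R/2))ᶜ, F z)
      ≤ ENNReal.ofReal (R ^ (-δ)) * (ENNReal.ofReal (4 ^ p) * K3) := by
    have hpt : ∀ z ∈ (ball (0:E N) R)ᶜ ∩ (ball y (R/2))ᶜ,
        F z ≤ ENNReal.ofReal (4 ^ p) * ENNReal.ofReal (‖z‖ ^ (-((N:ℝ)+δ))) := by
      rintro z ⟨hz1, hz2⟩
      simp only [Set.mem_compl_iff, mem_ball, dist_zero_right, not_lt] at hz1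
      have hz' : R/2 ≤ ‖y - z‖ := by
        simp only [Set.mem_compl_iff, mem_ball, not_lt, dist_eq_norm] at hz2
        rwa [norm_sub_rev] at hz2
      have hzn : 0 < ‖z‖ := lt_of_lt_of_le hR0 hz1
      have h4 : ‖z‖ / 4 ≤ ‖y - z‖ := by
        rcases le_or_gt ‖z‖ (2*R) with h | h
        · linarith
        · have hyn : ‖z‖ - ‖y‖ ≤ ‖y - z‖ := by
            rw [norm_sub_rev]
            exact norm_sub_norm_le z y
          have : ‖y‖ = R - 1 := by rw [hR]; ring
          linarith
      rw [hF, ← ENNReal.ofReal_mul (by positivity)]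
      apply ENNReal.ofReal_le_ofReal
      have e1 : ‖y - z‖ ^ (-p) ≤ (‖z‖/4) ^ (-p) :=
        Real.rpow_le_rpow_of_nonpos (by linarith) h4 (by linarith)
      have e2 : (1 + ‖z‖) ^ (-(2+δ)) ≤ ‖z‖ ^ (-(2+δ)) :=
        Real.rpow_le_rpow_of_nonpos hzn (by linarith) (by linarith)
      calc ‖y - z‖ ^ (-p) * (1 + ‖z‖) ^ (-(2+δ))
          ≤ (‖z‖/4) ^ (-p) * ‖z‖ ^ (-(2+δ)) :=
            mul_le_mul e1 e2 (by positivity) (by positivity)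
        _ = 4 ^ p * ‖z‖ ^ (-((N:ℝ)+δ)) := by
            rw [Real.div_rpow (norm_nonneg z) (by norm_num : (0:ℝ) ≤ 4),
              Real.rpow_neg (by norm_num : (0:ℝ) ≤ 4), div_eq_mul_inv, inv_inv, mul_comm (‖z‖ ^ (-p)),
              mul_assoc, ← Real.rpow_add hzn,
              show -p + -(2+δ) = -((N:ℝ)+δ) by rw [hp]; ring]
    calc (∫⁻ z in (ball (0:E N) R)ᶜ ∩ (ball y (R/2))ᶜ, F z)
        ≤ ∫⁻ z in (ball (0:E N) R)ᶜ ∩ (ball y (R/2))ᶜ,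
            ENNReal.ofReal (4 ^ p) * ENNReal.ofReal (‖z‖ ^ (-((N:ℝ)+δ))) :=
          setLIntegral_mono' (hB0.compl.inter hA.compl) hpt
      _ ≤ ∫⁻ z in (ball (0:E N) R)ᶜ,
            ENNReal.ofReal (4 ^ p) * ENNReal.ofReal (‖z‖ ^ (-((N:ℝ)+δ))) :=
          lintegral_mono_set Set.inter_subset_left
      _ = ENNReal.ofReal (4 ^ p) * ∫⁻ z in (ball (0:E N) R)ᶜ, ENNReal.ofReal (‖z‖ ^ (-((N:ℝ)+δ))) :=
          lintegral_const_mul' _ _ ENNReal.ofReal_ne_top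
      _ = ENNReal.ofReal (4 ^ p) * (ENNReal.ofReal (R ^ ((N:ℝ) - ((N:ℝ)+δ))) * K3) := by
          rw [RieszAux.compl_scale ((N:ℝ)+δ) hR0]
      _ = ENNReal.ofReal (R ^ (-δ)) * (ENNReal.ofReal (4 ^ p) * K3) := by
          rw [show (N:ℝ) - ((N:ℝ)+δ) = -δ by ring, ← mul_assoc, ← mul_assoc,
            mul_comm (ENNReal.ofReal (4 ^ p))]
  -- split
  have hsplit2 : (∫⁻ z in (ball y (R/2))ᶜ, F z)
      = (∫⁻ z in ball (0:E N) R ∩ (ball y (R/2))ᶜ, F z)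
        + ∫⁻ z in (ball (0:E N) R)ᶜ ∩ (ball y (R/2))ᶜ, F z := by
    have h := lintegral_add_compl F hB0 (μ := volume.restrict (ball y (R/2))ᶜ)
    calc (∫⁻ z in (ball y (R/2))ᶜ, F z)
        = (∫⁻ z in ball (0:E N) R, F z ∂(volume.restrict (ball y (R/2))ᶜ))
          + ∫⁻ z in (ball (0:E N) R)ᶜ, F z ∂(volume.restrict (ball y (R/2))ᶜ) := h.symm
      _ = _ := by rw [Measure.restrict_restrict hB0, Measure.restrict_restrict hB0.compl]
  have key : (∫⁻ z : E N, F z) ≤ ENNReal.ofReal (R ^ (-δ)) * M := by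
    calc (∫⁻ z : E N, F z)
        = (∫⁻ z in ball y (R/2), F z) + ∫⁻ z in (ball y (R/2))ᶜ, F z :=
          (lintegral_add_compl F hA).symm
      _ = (∫⁻ z in ball y (R/2), F z)
          + ((∫⁻ z in ball (0:E N) R ∩ (ball y (R/2))ᶜ, F z)
            + ∫⁻ z in (ball (0:E N) R)ᶜ ∩ (ball y (R/2))ᶜ, F z) := by rw [hsplit2]
      _ ≤ ENNReal.ofReal (R ^ (-δ)) * (ENNReal.ofReal (2 ^ δ) * K1)
          + (ENNReal.ofReal (R ^ (-δ)) * (ENNReal.ofReal (2 ^ p) * K2)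
            + ENNReal.ofReal (R ^ (-δ)) * (ENNReal.ofReal (4 ^ p) * K3)) :=
          add_le_add boundA (add_le_add boundB boundC)
      _ = ENNReal.ofReal (R ^ (-δ)) * M := by rw [hM]; ring
  have h1 : (∫⁻ z : E N, F z).toReal ≤ (ENNReal.ofReal (R ^ (-δ)) * M).toReal :=
    ENNReal.toReal_mono (ENNReal.mul_ne_top ENNReal.ofReal_ne_top hMf) key
  rw [ENNReal.toReal_mul, ENNReal.toReal_ofReal (by positivity)] at h1
  calc (∫⁻ z : E N, F z).toReal ≤ R ^ (-δ) * M.toReal := h1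
    _ ≤ (M.toReal + 1) * R ^ (-δ) := by
        rw [mul_comm]
        exact mul_le_mul_of_nonneg_right (by linarith) (by positivity)

end
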